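/- Let R ⊂ T be a minimal ring extension of commutative rings where R is von Neumann regular and T is reduced. Then T is integral over R and T is von Neumann regular. -/

import Mathlib

open Polynomial

lemma idem_pow {T : Type*} [CommRing T] {e : T} (he : e * e = e) : ∀ m : ℕ, e ^ (m + 1) = e := by
  intro m; induction m with
  | zero => simp
  | succ k ih => rw [pow_succ, ih, he]

lemma mem_int {T : Type*} [CommRing T] (R : Subring T) {u : T} (h : u ∈ R) : IsIntegral R u :=
  ⟨X - C ⟨u, h⟩, monic_X_sub_C _, by
    have : (algebraMap (↥R) T) ⟨u, h⟩ = u := rfl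
    simp [this]⟩

lemma dich {T : Type*} [CommRing T] (R : Subring T) (hmin : IsCoatom R)
    (e : T) (he : e ∈ R) (hid : e * e = e) :
    (∀ u : T, e * u ∈ R) ∨ (∀ u : T, (1 - e) * u ∈ R) := by
  let S : Subring T :=
  { carrier := {v | ∃ r ∈ R, ∃ u : T, v = r + e * u}
    mul_mem' := by
      rintro v w ⟨r, hr, u, rfl⟩ ⟨r', hr', u', rfl⟩
      exact ⟨r * r', mul_mem hr hr', r * u' + r' * u + e * (u * u'), by ring⟩
    one_mem' := ⟨1, one_mem R, 0, by ring⟩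
    add_mem' := by
      rintro v w ⟨r, hr, u, rfl⟩ ⟨r', hr', u', rfl⟩
      exact ⟨r + r', add_mem hr hr', u + u', by ring⟩
    zero_mem' := ⟨0, zero_mem R, 0, by ring⟩
    neg_mem' := by
      rintro v ⟨r, hr, u, rfl⟩
      exact ⟨-r, neg_mem hr, -u, by ring⟩ }
  have hle : R ≤ S := fun r hr => ⟨r, hr, 0, by ring⟩
  rcases lt_or_eq_of_le hle with hlt | heq
  · right
    have htop : S = ⊤ := hmin.2 S hlt
    intro u
    have hu : u ∈ S := by rw [htop]; trivial
    obtain ⟨r, hr, w, rfl⟩ := hu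
    have : (1 - e) * (r + e * w) = r - e * r := by linear_combination (-w) * hid
    rw [this]
    exact sub_mem hr (mul_mem he hr)
  · left
    intro u
    have : e * u ∈ S := ⟨0, zero_mem R, u, by ring⟩
    rw [← heq] at this
    exact this

lemma key {T : Type*} [CommRing T] (R : Subring T) (hmin : IsCoatom R)
    (hvnr : ∀ a : R, ∃ x : R, a = a * a * x) :
    ∀ (n : ℕ) (c : ℕ → T), (∀ i, c i ∈ R) →
      ∀ t : T, (∑ i ∈ Finset.range (n + 1), c i * t ^ (2 * i)) = t → IsIntegral R t := by
  intro n
  induction n with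
  | zero =>
    intro c hc t ht
    rw [Finset.sum_range_one] at ht
    norm_num at ht
    exact mem_int R (ht ▸ hc 0)
  | succ n ih =>
    intro c hc t ht
    obtain ⟨x, hx⟩ := hvnr ⟨c (n + 1), hc (n + 1)⟩
    have hx' : c (n + 1) = c (n + 1) * c (n + 1) * (x : T) := congrArg Subtype.val hx
    have heR : c (n + 1) * (x : T) ∈ R := mul_mem (hc _) x.2
    have hid : (c (n + 1) * (x : T)) * (c (n + 1) * (x : T)) = c (n + 1) * (x : T) := by
      linear_combination (-(x : T)) * hx'
    -- peel hypothesis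
    rw [Finset.sum_range_succ] at ht
    rcases dich R hmin _ heR hid with h1 | h2
    · -- (c(n+1)x) T ⊆ R ; s := (1 - e) t
      set e := c (n + 1) * (x : T) with he
      have hsrel : (∑ i ∈ Finset.range (n + 1), ((1 - e) * c i) * ((1 - e) * t) ^ (2 * i))
          = (1 - e) * t := by
        have expand : ∀ i ∈ Finset.range (n + 1),
            ((1 - e) * c i) * ((1 - e) * t) ^ (2 * i) = (1 - e) * (c i * t ^ (2 * i)) := by
          intro i _
          rcases Nat.eq_zero_or_pos i with rfl | hpos
          · simp
          · obtain ⟨k, hk⟩ : ∃ k, 2 * i = k + 1 := ⟨2 * i - 1, by omega⟩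
            have hid' : (1 - e) * (1 - e) = 1 - e := by linear_combination hid
            rw [hk, mul_pow, idem_pow hid']
            linear_combination (c i * t ^ (k + 1)) * hid
        rw [Finset.sum_congr rfl expand, ← Finset.mul_sum]
        have hS : ∑ i ∈ Finset.range (n + 1), c i * t ^ (2 * i)
            = t - c (n + 1) * t ^ (2 * (n + 1)) := by linear_combination ht
        rw [hS]
        have h0 : (1 - e) * c (n + 1) = 0 := by linear_combination hx'
        linear_combination (-(t ^ (2 * (n + 1)))) * h0
      have hs_int : IsIntegral R ((1 - e) * t) :=
        ih _ (fun i => mul_mem (sub_mem (one_mem R) heR) (hc i)) _ hsrel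
      have hdecomp : t = ((⟨e * t, h1 t⟩ : R) : T) + (1 - e) * t := by
        push_cast; ring
      rw [hdecomp]
      exact (mem_int R (h1 t)).add hs_int
    · -- (1-e) T ⊆ R ; s := e t is root of monic polynomial
      set e := c (n + 1) * (x : T) with he
      set s := e * t with hs
      have hwR : e * (x : T) ∈ R := mul_mem heR x.2
      have huR : ∀ i, e * (x : T) * c i ∈ R := fun i => mul_mem hwR (hc i)
      set q : Polynomial ↥R :=
        X ^ (2 * n + 2) +
          ((∑ i ∈ Finset.range (n + 1), C (⟨e * (x : T) * c i, huR i⟩ : ↥R) * X ^ (2 * i)) -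
            C (⟨e * (x : T), hwR⟩ : ↥R) * X) with hq
      have hmonic : q.Monic := by
        apply Polynomial.monic_X_pow_add
        apply lt_of_le_of_lt (Polynomial.degree_sub_le _ _)
        rw [max_lt_iff]
        constructor
        · apply lt_of_le_of_lt (Polynomial.degree_sum_le _ _)
          rw [Finset.sup_lt_iff (WithBot.bot_lt_coe _)]
          intro i hi
          apply lt_of_le_of_lt (Polynomial.degree_C_mul_X_pow_le _ _)
          exact_mod_cast (by simp at hi; omega : 2 * i < 2 * n + 2)
        · apply lt_of_le_of_lt (Polynomial.degree_C_mul_X_le _)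
          exact_mod_cast (by omega : 1 < 2 * n + 2)
      have haev : Polynomial.aeval s q = 0 := by
        have hcoe : ∀ r : ↥R, algebraMap (↥R) T r = (r : T) := fun r => rfl
        rw [hq]
        simp only [map_add, map_sub, map_pow, map_mul, map_sum, Polynomial.aeval_X,
          Polynomial.aeval_C, hcoe]
        -- termwise rewrite of (e*t)^(2*i)
        have hterm : ∀ i ∈ Finset.range (n + 1),
            (e * (x : T) * c i) * s ^ (2 * i) = (e * (x : T) * c i) * t ^ (2 * i) := by
          intro i _
          rcases Nat.eq_zero_or_pos i with rfl | hpos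
          · simp
          · obtain ⟨k, hk⟩ : ∃ k, 2 * i = k + 1 := ⟨2 * i - 1, by omega⟩
            rw [hs, hk, mul_pow, idem_pow hid]
            linear_combination ((x : T) * c i * t ^ (k + 1)) * hid
        rw [Finset.sum_congr rfl hterm]
        have hsum : ∑ i ∈ Finset.range (n + 1), (e * (x : T) * c i) * t ^ (2 * i)
            = e * (x : T) * ∑ i ∈ Finset.range (n + 1), c i * t ^ (2 * i) := by
          rw [Finset.mul_sum]
          exact Finset.sum_congr rfl fun i _ => by ring
        rw [hsum]
        have hpow : s ^ (2 * n + 2) = e * t ^ (2 * n + 2) := by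
          rw [hs, mul_pow]
          congr 1
          exact idem_pow hid (2 * n + 1)
        rw [hpow]
        linear_combination (e * (x : T)) * ht + ((x : T) * t ^ (2 * (n + 1)) + (x : T) * (x : T) * t) * hx'
      have hs_int : IsIntegral R s := ⟨q, hmonic, haev⟩
      have hdecomp : t = ((⟨(1 - e) * t, h2 t⟩ : R) : T) + s := by
        push_cast; rw [hs]; ring
      rw [hdecomp]
      exact (mem_int R (h2 t)).add hs_int

lemma vnrT {T : Type*} [CommRing T] (R : Subring T) (hmin : IsCoatom R)
    (hvnr : ∀ a : R, ∃ x : R, a = a * a * x) (hred : IsReduced T) :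
    ∀ a : T, ∃ x : T, a = a * a * x := by
  intro a
  let S : Subring T :=
  { carrier := {v | ∃ r ∈ R, ∃ u : T, v = r + a * a * u}
    mul_mem' := by
      rintro v w ⟨r, hr, u, rfl⟩ ⟨r', hr', u', rfl⟩
      exact ⟨r * r', mul_mem hr hr', r * u' + r' * u + a * a * (u * u'), by ring⟩
    one_mem' := ⟨1, one_mem R, 0, by ring⟩
    add_mem' := by
      rintro v w ⟨r, hr, u, rfl⟩ ⟨r', hr', u', rfl⟩
      exact ⟨r + r', add_mem hr hr', u + u', by ring⟩
    zero_mem' := ⟨0, zero_mem R, 0, by ring⟩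
    neg_mem' := by
      rintro v ⟨r, hr, u, rfl⟩
      exact ⟨-r, neg_mem hr, -u, by ring⟩ }
  have hle : R ≤ S := fun r hr => ⟨r, hr, 0, by ring⟩
  rcases lt_or_eq_of_le hle with hlt | heq
  · -- S = ⊤ : a = r + a²u
    have htop : S = ⊤ := hmin.2 S hlt
    have ha : a ∈ S := by rw [htop]; trivial
    obtain ⟨r, hr, u, ha⟩ := ha
    obtain ⟨y, hy⟩ := hvnr ⟨r, hr⟩
    have hy' : r = r * r * (y : T) := congrArg Subtype.val hy
    refine ⟨(1 - a * u) * (1 - a * u) * (y : T) + u, ?_⟩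
    linear_combination hy' + (1 - (a - a * a * u + r) * (y : T)) * ha
  · -- S = R : a² ∈ R
    have ha2 : a * a ∈ R := by
      have : a * a ∈ S := ⟨0, zero_mem R, 1, by ring⟩
      rwa [← heq] at this
    obtain ⟨x, hx⟩ := hvnr ⟨a * a, ha2⟩
    have hx' : a * a = (a * a) * (a * a) * (x : T) := congrArg Subtype.val hx
    have hsq : (a - a * a * a * (x : T)) * (a - a * a * a * (x : T)) = 0 := by
      linear_combination (1 - a * a * (x : T)) * hx'
    have h0 : a - a * a * a * (x : T) = 0 := by
      have := hred.eq_zero (a - a * a * a * (x : T)) ⟨2, by rw [pow_two]; exact hsq⟩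
      exact this
    exact ⟨a * (x : T), by linear_combination h0⟩


/-- If `R ⊂ T` is a minimal ring extension with `R` von Neumann regular and `T` reduced,
then `T` is integral over `R` and `T` is von Neumann regular. -/
theorem stmt_8 (T : Type*) [CommRing T] (R : Subring T)
    (hmin : IsCoatom R)
    (hvnr : ∀ a : R, ∃ x : R, a = a * a * x)
    (hred : IsReduced T) :
    Algebra.IsIntegral R T ∧ ∀ a : T, ∃ x : T, a = a * a * x := by
  refine ⟨?_, vnrT R hmin hvnr hred⟩
  constructor
  intro t
  by_cases htR : t ∈ R
  · exact mem_int R htR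
  by_cases htt : t * t ∈ R
  · refine ⟨X ^ 2 - C ⟨t * t, htt⟩, Polynomial.monic_X_pow_sub_C _ two_ne_zero, ?_⟩
    have hcoe : (algebraMap (↥R) T) ⟨t * t, htt⟩ = t * t := rfl
    simp [hcoe, pow_two]
  · set A := Algebra.adjoin (↥R) ({t * t} : Set T) with hA
    have hle : R ≤ A.toSubring := fun r hr => A.algebraMap_mem ⟨r, hr⟩
    have hmem : t * t ∈ A.toSubring := Algebra.subset_adjoin rfl
    have hlt : R < A.toSubring := lt_of_le_not_ge hle fun hba => htt (hba hmem)
    have htop := hmin.2 _ hlt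
    have htA : t ∈ A := by
      have : t ∈ A.toSubring := by rw [htop]; trivial
      exact this
    rw [hA, Algebra.adjoin_singleton_eq_range_aeval] at htA
    obtain ⟨p, hp⟩ := htA
    have hp' : Polynomial.aeval (t * t) p = t := hp
    have hsum := Polynomial.aeval_eq_sum_range (p := p) (t * t)
    rw [hp'] at hsum
    have hsmul : ∀ (r : ↥R) (u : T), r • u = (r : T) * u := fun r u => rfl
    have heq : (∑ i ∈ Finset.range (p.natDegree + 1), ((p.coeff i : T)) * t ^ (2 * i)) = t := by
      conv_rhs => rw [hsum]
      refine Finset.sum_congr rfl fun i _ => ?_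
      rw [hsmul, pow_mul, pow_two]
    exact key R hmin hvnr p.natDegree _ (fun i => (p.coeff i).2) t heq
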